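/- Let V and Q be real inner product spaces, let b : V → Q → ℝ be a bilinear map, let F : ℝ → Q, and let v : ℝ → V and p : ℝ → Q be functions that are differentiable at a time t with derivatives v'(t) and p'(t). Suppose that ⟨v'(t), w⟩ = b(w, p(t)) for all w ∈ V, and that ⟨p'(t), q⟩ + b(v(t), q) = ⟨F(t), q⟩ for all q ∈ Q. Then the energy function t ↦ ‖v(t)‖² + ‖p(t)‖² is differentiable at t with derivative equal to 2⟨F(t), p(t)⟩. -/

import Mathlib

open RealInnerProductSpace

/-- Abstract energy identity for the mixed Galerkin formulation of the wave
equation: if `⟪v', w⟫ = b w (p t)` for all `w` and `⟪p', q⟫ + b (v t) q = ⟪F t, q⟫`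
for all `q`, then the energy `‖v‖² + ‖p‖²` has derivative `2⟪F t, p t⟫` at `t`. -/
theorem stmt_0
    {V Q : Type*} [NormedAddCommGroup V] [InnerProductSpace ℝ V]
    [NormedAddCommGroup Q] [InnerProductSpace ℝ Q]
    (b : V →ₗ[ℝ] Q →ₗ[ℝ] ℝ) (F : ℝ → Q)
    (v : ℝ → V) (p : ℝ → Q) (t : ℝ) (v' : V) (p' : Q)
    (hv : HasDerivAt v v' t) (hp : HasDerivAt p p' t)
    (h1 : ∀ w : V, ⟪v', w⟫ = b w (p t))
    (h2 : ∀ q : Q, ⟪p', q⟫ + b (v t) q = ⟪F t, q⟫) :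
    HasDerivAt (fun s => ‖v s‖ ^ 2 + ‖p s‖ ^ 2) (2 * ⟪F t, p t⟫) t := by
  have hv2 : HasDerivAt (fun s => ⟪v s, v s⟫) (⟪v t, v'⟫ + ⟪v', v t⟫) t :=
    hv.inner ℝ hv
  have hp2 : HasDerivAt (fun s => ⟪p s, p s⟫) (⟪p t, p'⟫ + ⟪p', p t⟫) t :=
    hp.inner ℝ hp
  have key : (⟪v t, v'⟫ + ⟪v', v t⟫) + (⟪p t, p'⟫ + ⟪p', p t⟫) = 2 * ⟪F t, p t⟫ := by
    have e1 : ⟪v t, v'⟫ = b (v t) (p t) := by rw [real_inner_comm, h1 (v t)]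
    have e1' := h1 (v t)
    have e2 := h2 (p t)
    have e3 : ⟪p t, p'⟫ = ⟪p', p t⟫ := real_inner_comm _ _
    linarith
  have := (hv2.add hp2).congr_deriv key
  simpa only [real_inner_self_eq_norm_sq, Pi.add_def] using this
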